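/- Let H be a complex Hilbert space and T a densely defined linear operator (LinearPMap) on H such that (i) T is symmetric, i.e. ⟨T u, v⟩ = ⟨u, T v⟩ for all u, v in the domain of T; (ii) T is positive, i.e. the real part of ⟨u, T u⟩ is ≥ 0 for all u in the domain of T; and (iii) the only vector v in the domain of the adjoint T* with T* v = −v is v = 0. Then T is essentially selfadjoint: the closure of T is a selfadjoint operator, i.e. the adjoint of T equals the closure of T. -/

import Mathlib

open Filter Topology

local notation "⟪" x ", " y "⟫" => @inner ℂ _ _ x y

/-- A densely defined, symmetric, positive operator `T` on a complex Hilbert space whose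
adjoint has no `-1` eigenvector is essentially selfadjoint: `T.adjoint = T.closure`. -/
theorem essentially_selfadjoint_of_positive_of_no_defect
    {H : Type*} [NormedAddCommGroup H] [InnerProductSpace ℂ H] [CompleteSpace H]
    (T : H →ₗ.[ℂ] H) (hdense : Dense (T.domain : Set H))
    (hsymm : ∀ u v : T.domain,
      (inner ℂ (T u) (v : H) : ℂ) = inner ℂ (u : H) (T v))
    (hpos : ∀ u : T.domain, 0 ≤ (inner ℂ (u : H) (T u) : ℂ).re)
    (hdefect : ∀ v : T.adjoint.domain, T.adjoint v = -(v : H) → (v : H) = 0) :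
    T.adjoint = T.closure := by
  classical
  -- T is a formal adjoint of itself
  have hTT : T.IsFormalAdjoint T := fun u v => hsymm u v
  -- T is closable
  have hclosable : T.IsClosable := by
    refine ⟨T.graph.topologicalClosure.toLinearPMap,
      (Submodule.toLinearPMap_graph_eq _ ?_).symm⟩
    rintro ⟨x, y⟩ hxy (hx : x = 0)
    subst hx
    show y = 0
    have hmem : ((0 : H), y) ∈ closure (T.graph : Set (H × H)) := by
      rwa [← Submodule.topologicalClosure_coe]
    rcases mem_closure_iff_seq_limit.1 hmem with ⟨g, hg, hgl⟩
    choose f hf1 hf2 using fun n => T.mem_graph_iff.1 (hg n)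
    have h1 : Tendsto (fun n => ((f n : H))) atTop (𝓝 (0 : H)) := by
      have := (continuous_fst.tendsto _).comp hgl
      simpa only [Function.comp_def, hf1] using this
    have h2 : Tendsto (fun n => T (f n)) atTop (𝓝 y) := by
      have := (continuous_snd.tendsto _).comp hgl
      simpa only [Function.comp_def, hf2] using this
    refine hdense.eq_zero_of_inner_right ℂ (x := y) fun w hw => ?_
    obtain ⟨v, rfl⟩ : ∃ v : T.domain, (v : H) = w := ⟨⟨w, hw⟩, rfl⟩
    have hA : Tendsto (fun n => ⟪(v : H), T (f n)⟫) atTop (𝓝 ⟪(v : H), y⟫) :=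
      tendsto_const_nhds.inner h2
    have hB : Tendsto (fun n => ⟪T v, (f n : H)⟫) atTop (𝓝 (0 : ℂ)) := by
      have hB0 : Tendsto (fun n => ⟪T v, (f n : H)⟫) atTop (𝓝 ⟪T v, (0 : H)⟫) :=
        tendsto_const_nhds.inner h1
      simpa using hB0
    have heq : (fun n => ⟪(v : H), T (f n)⟫) = fun n => ⟪T v, (f n : H)⟫ := by
      funext n
      rw [← inner_conj_symm, hsymm, inner_conj_symm]
    rw [heq] at hA
    exact tendsto_nhds_unique hA hB
  set S := T.closure with hSdef
  have hTleS : T ≤ S := T.le_closure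
  have hSclosed : S.IsClosed := hclosable.closure_isClosed
  -- sequence approximation for elements of the closure's domain
  have happrox : ∀ u : S.domain, ∃ f : ℕ → T.domain,
      Tendsto (fun n => ((f n : H))) atTop (𝓝 (u : H)) ∧
      Tendsto (fun n => T (f n)) atTop (𝓝 (S u)) := by
    intro u
    have hmem : ((u : H), S u) ∈ closure (T.graph : Set (H × H)) := by
      have h := S.mem_graph u
      rw [← hclosable.graph_closure_eq_closure_graph] at h
      rwa [← Submodule.topologicalClosure_coe]
    rcases mem_closure_iff_seq_limit.1 hmem with ⟨g, hg, hgl⟩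
    choose f hf1 hf2 using fun n => T.mem_graph_iff.1 (hg n)
    refine ⟨f, ?_, ?_⟩
    · have := (continuous_fst.tendsto _).comp hgl
      simpa only [Function.comp_def, hf1] using this
    · have := (continuous_snd.tendsto _).comp hgl
      simpa only [Function.comp_def, hf2] using this
  -- the closure is a formal adjoint of T
  have hST : T.IsFormalAdjoint S := by
    refine LinearPMap.IsFormalAdjoint.symm fun u v => ?_
    rcases happrox u with ⟨f, hf1, hf2⟩
    have hA : Tendsto (fun n => ⟪T (f n), (v : H)⟫) atTop (𝓝 ⟪S u, (v : H)⟫) :=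
      hf2.inner tendsto_const_nhds
    have hB : Tendsto (fun n => ⟪(f n : H), T v⟫) atTop (𝓝 ⟪(u : H), T v⟫) :=
      hf1.inner tendsto_const_nhds
    have heq : (fun n => ⟪T (f n), (v : H)⟫) = fun n => ⟪(f n : H), T v⟫ := by
      funext n; exact hsymm (f n) v
    rw [heq] at hA
    exact tendsto_nhds_unique hA hB
  have hSadj : S ≤ T.adjoint := hST.le_adjoint hdense
  -- positivity of the closure
  have hSpos : ∀ u : S.domain, 0 ≤ (⟪(u : H), S u⟫).re := by
    intro u
    rcases happrox u with ⟨f, hf1, hf2⟩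
    have h : Tendsto (fun n => (⟪(f n : H), T (f n)⟫).re) atTop (𝓝 (⟪(u : H), S u⟫).re) :=
      (Complex.continuous_re.tendsto _).comp (hf1.inner hf2)
    exact ge_of_tendsto' h fun n => hpos (f n)
  -- the key norm inequality
  have hineq : ∀ u : S.domain, ‖(u : H)‖ ^ 2 + ‖S u‖ ^ 2 ≤ ‖S u + (u : H)‖ ^ 2 := by
    intro u
    have hns := norm_add_sq (𝕜 := ℂ) (E := H) (S u) ((u : H))
    have hre : 0 ≤ RCLike.re (⟪S u, (u : H)⟫) := by
      have : RCLike.re (⟪S u, (u : H)⟫) = (⟪(u : H), S u⟫).re := by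
        rw [inner_re_symm]; rfl
      rw [this]; exact hSpos u
    rw [hns]; linarith
  -- the range of `S + 1`
  set L : S.domain →ₗ[ℂ] H := S.toFun + S.domain.subtype with hLdef
  have hL : ∀ u : S.domain, L u = S u + (u : H) := fun u => rfl
  set R : Submodule ℂ H := LinearMap.range L with hRdef
  -- R is closed
  have hRclosed : IsClosed (R : Set H) := by
    refine isClosed_of_closure_subset fun y hy => ?_
    rcases mem_closure_iff_seq_limit.1 hy with ⟨g, hg, hgl⟩
    choose u hu using fun n => hg n
    have hkey : ∀ n m : ℕ, ‖(u n : H) - u m‖ ≤ ‖g n - g m‖ ∧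
        ‖S (u n) - S (u m)‖ ≤ ‖g n - g m‖ := by
      intro n m
      have h1 : g n - g m = S (u n - u m) + ((u n - u m : S.domain) : H) := by
        rw [← hu n, ← hu m, ← map_sub, hL]
      have h2 := hineq (u n - u m)
      rw [← h1] at h2
      have e1 : ((u n - u m : S.domain) : H) = (u n : H) - u m := rfl
      have e2 : S (u n - u m) = S (u n) - S (u m) := map_sub _ _ _
      rw [e1, e2] at h2
      constructor
      · nlinarith [norm_nonneg ((u n : H) - u m), norm_nonneg (S (u n) - S (u m)),
          norm_nonneg (g n - g m)]
      · nlinarith [norm_nonneg ((u n : H) - u m), norm_nonneg (S (u n) - S (u m)),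
          norm_nonneg (g n - g m)]
    have hgc : CauchySeq g := hgl.cauchySeq
    have hcau1 : CauchySeq fun n => ((u n : H)) := by
      rw [Metric.cauchySeq_iff] at hgc ⊢
      intro ε hε
      rcases hgc ε hε with ⟨N, hN⟩
      refine ⟨N, fun n hn m hm => ?_⟩
      have h := hN n hn m hm
      rw [dist_eq_norm] at h ⊢
      exact lt_of_le_of_lt (by simpa using (hkey n m).1) h
    have hcau2 : CauchySeq fun n => S (u n) := by
      rw [Metric.cauchySeq_iff] at hgc ⊢
      intro ε hε
      rcases hgc ε hε with ⟨N, hN⟩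
      refine ⟨N, fun n hn m hm => ?_⟩
      have h := hN n hn m hm
      rw [dist_eq_norm] at h ⊢
      exact lt_of_le_of_lt (by simpa using (hkey n m).2) h
    rcases cauchySeq_tendsto_of_complete hcau1 with ⟨a, ha⟩
    rcases cauchySeq_tendsto_of_complete hcau2 with ⟨b, hb⟩
    have hmem : (a, b) ∈ S.graph := by
      refine hSclosed.mem_of_tendsto (ha.prodMk_nhds hb) (Eventually.of_forall fun n => ?_)
      exact S.mem_graph (u n)
    rcases S.mem_graph_iff.1 hmem with ⟨w, hw1, hw2⟩
    have hyval : y = b + a := by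
      refine tendsto_nhds_unique hgl ?_
      exact Tendsto.congr (fun n => by rw [← hL, hu n]) (hb.add ha)
    refine ⟨w, ?_⟩
    rw [hL, hw2, hw1, hyval]
  -- R is all of H
  have hRtop : R = ⊤ := by
    haveI : CompleteSpace R := hRclosed.completeSpace_coe
    rw [← Submodule.orthogonal_eq_bot_iff]
    rw [Submodule.eq_bot_iff]
    intro w hw
    have hw' : ∀ x : T.domain, ⟪(-w : H), (x : H)⟫ = ⟪w, T x⟫ := by
      intro x
      have hxS : (x : H) ∈ S.domain := hTleS.1 x.2
      have hval : T x = S ⟨(x : H), hxS⟩ := hTleS.2 rfl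
      have hmemR : T x + (x : H) ∈ R := by
        refine ⟨⟨(x : H), hxS⟩, ?_⟩
        rw [hL, ← hval]
      have h0 : ⟪T x + (x : H), w⟫ = 0 := (Submodule.mem_orthogonal _ _).1 hw _ hmemR
      rw [inner_add_left] at h0
      have h1 : ⟪T x, w⟫ = -⟪(x : H), w⟫ := by linear_combination h0
      calc ⟪(-w : H), (x : H)⟫ = -⟪w, (x : H)⟫ := by rw [inner_neg_left]
        _ = -(starRingEnd ℂ) ⟪(x : H), w⟫ := by rw [inner_conj_symm]
        _ = (starRingEnd ℂ) ⟪T x, w⟫ := by rw [h1]; simp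
        _ = ⟪w, T x⟫ := by rw [inner_conj_symm]
    have hmemw : w ∈ T.adjoint.domain :=
      LinearPMap.mem_adjoint_domain_of_exists w ⟨-w, hw'⟩
    have hTw : T.adjoint ⟨w, hmemw⟩ = -w :=
      LinearPMap.adjoint_apply_eq hdense ⟨w, hmemw⟩ hw'
    exact hdefect ⟨w, hmemw⟩ hTw
  -- main step: T.adjoint ≤ S
  have hkey : ∀ v : T.adjoint.domain, ∃ u : S.domain,
      (u : H) = (v : H) ∧ S u = T.adjoint v := by
    intro v
    obtain ⟨u, hu⟩ : ∃ u : S.domain, L u = T.adjoint v + (v : H) := by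
      have : T.adjoint v + (v : H) ∈ R := by rw [hRtop]; trivial
      exact this
    rw [hL] at hu
    have huA : (u : H) ∈ T.adjoint.domain := hSadj.1 u.2
    have huAval : S u = T.adjoint ⟨(u : H), huA⟩ := hSadj.2 rfl
    set d : T.adjoint.domain := v - ⟨(u : H), huA⟩ with hddef
    have hdc : (d : H) = (v : H) - (u : H) := rfl
    have hd : T.adjoint d = -(d : H) := by
      have hmap : T.adjoint d = T.adjoint v - T.adjoint ⟨(u : H), huA⟩ := map_sub _ _ _
      rw [hmap, ← huAval, hdc]
      have : S u = T.adjoint v + (v : H) - (u : H) := by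
        rw [← hu]; abel
      rw [this]; abel
    have hd0 := hdefect d hd
    rw [hdc, sub_eq_zero] at hd0
    refine ⟨u, hd0.symm, ?_⟩
    have : S u = T.adjoint v + (v : H) - (u : H) := by rw [← hu]; abel
    rw [this, hd0]; abel
  have hadjS : T.adjoint ≤ S := by
    refine ⟨fun x hx => ?_, fun x y hxy => ?_⟩
    · rcases hkey ⟨x, hx⟩ with ⟨u, hu1, _⟩
      have hu1' : (u : H) = x := hu1
      exact hu1' ▸ u.2
    · rcases hkey x with ⟨u, hu1, hu2⟩
      rw [← hu2]
      have : u = y := Subtype.ext (by rw [hu1, hxy])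
      rw [this]
  exact le_antisymm hadjS hSadj
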